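/- Consider the deterministic analogue of the reaching estimate: let z : [0,∞) → [0,∞) be absolutely continuous with z(0) = z₀ and z'(t) ≤ −α·1_{[z(t)>0]} + C̃ z(t) for a.e. t, where α, C̃ > 0. Then for every t > 0 with (C̃/α)(1−e^{−C̃t})^{−1} z₀ < 1, there exists s ∈ (0,t] with z(s) = 0. -/

import Mathlib

open Set Filter Topology intervalIntegral

theorem stmt_13 (z : ℝ → ℝ) (z₀ α C : ℝ) (hα : 0 < α) (hC : 0 < C)
    (hcont : Continuous z) (hnn : ∀ t, 0 ≤ z t) (hz0 : z 0 = z₀)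
    (hineq : ∀ s t : ℝ, 0 ≤ s → s ≤ t →
      z t - z s ≤ ∫ u in s..t, (-α * (if 0 < z u then 1 else 0) + C * z u)) :
    ∀ t > (0:ℝ), C / α * (1 - Real.exp (-C * t))⁻¹ * z₀ < 1 →
      ∃ s, 0 < s ∧ s ≤ t ∧ z s = 0 := by
  intro t ht hlt
  by_contra hcon
  push_neg at hcon
  have hpos : ∀ u : ℝ, 0 < u → u ≤ t → 0 < z u := fun u h1 h2 =>
    lt_of_le_of_ne (hnn u) (Ne.symm (hcon u h1 h2))
  have hE1 : 0 < Real.exp (-C * t) := Real.exp_pos _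
  have hE2 : Real.exp (-C * t) < 1 := by
    calc Real.exp (-C * t) < Real.exp 0 := Real.exp_lt_exp.2 (by nlinarith)
      _ = 1 := Real.exp_zero
  have hD : (0:ℝ) < 1 - Real.exp (-C * t) := by linarith
  have hz₀nn : 0 ≤ z₀ := hz0 ▸ hnn 0
  have hCz : C * z₀ < α * (1 - Real.exp (-C * t)) := by
    rw [show C/α*(1 - Real.exp (-C * t))⁻¹*z₀
        = C*z₀/(α*(1 - Real.exp (-C * t))) by field_simp] at hlt
    exact (div_lt_one (by positivity)).1 hlt
  obtain ⟨β, hβpos, hβα, hzβ⟩ :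
      ∃ β : ℝ, 0 < β ∧ β < α ∧ C * z₀ < β * (1 - Real.exp (-C * t)) := by
    refine ⟨(C*z₀/(1 - Real.exp (-C * t)) + α)/2, ?_, ?_, ?_⟩
    · have h0 : 0 ≤ C*z₀/(1 - Real.exp (-C * t)) := by positivity
      linarith
    · have h0 : C*z₀/(1 - Real.exp (-C * t)) < α := (div_lt_iff₀ hD).2 hCz
      linarith
    · rw [← div_lt_iff₀ hD]
      have h0 : C*z₀/(1 - Real.exp (-C * t)) < α := (div_lt_iff₀ hD).2 hCz
      linarith
  set B : ℝ → ℝ := fun x => (Real.exp (C*x) * (C*z₀ - β) + β)/C with hBdef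
  have hB : ∀ x, HasDerivAt B (-β + C * B x) x := by
    intro x
    have h1 : HasDerivAt (fun x : ℝ => C * x) C x := by
      simpa using (hasDerivAt_id x).const_mul C
    have h2 := (((h1.exp).mul_const (C*z₀ - β)).add_const β).div_const C
    refine h2.congr_deriv ?_
    rw [hBdef]
    field_simp
    ring
  have key : ∀ ⦃x⦄, x ∈ Icc (0:ℝ) t → z x ≤ B x := by
    refine image_le_of_liminf_slope_right_lt_deriv_boundary
      (f := z) (f' := fun x => -α + C * z x) (B := B) (B' := fun x => -β + C * B x)
      hcont.continuousOn ?_ ?_ hB ?_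
    · -- slope condition
      intro x hx r hr
      apply Filter.Eventually.frequently
      obtain ⟨r', hr1, hr2⟩ := exists_between hr
      have hcts : Continuous fun u => -α + C * z u := by continuity
      have hev : ∀ᶠ u in 𝓝 x, -α + C * z u < r' :=
        Filter.Tendsto.eventually_lt_const hr1 (hcts.tendsto x)
      rcases Metric.eventually_nhds_iff.1 hev with ⟨δ, hδpos, hδ⟩
      have hm : x < min (x + δ/2) t := lt_min (by linarith) hx.2
      filter_upwards [Ioc_mem_nhdsGT_of_mem ⟨le_rfl, hm⟩] with y hy
      have hxy : x < y := hy.1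
      have hyt : y ≤ t := hy.2.trans (min_le_right _ _)
      have hyδ : y ≤ x + δ/2 := hy.2.trans (min_le_left _ _)
      have hbound : ∀ u ∈ Icc x y, (-α + C * z u) ≤ r' := by
        intro u hu
        refine (hδ ?_).le
        rw [Real.dist_eq, abs_sub_lt_iff]
        constructor <;> [linarith [hu.2]; linarith [hu.1]]
      have hcongr : (∫ u in x..y, (-α * (if 0 < z u then 1 else 0) + C * z u))
          = ∫ u in x..y, (-α + C * z u) := by
        apply intervalIntegral.integral_congr_ae
        filter_upwards with u hu
        rw [Set.uIoc_of_le hxy.le] at hu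
        have : 0 < z u := hpos u (lt_of_le_of_lt hx.1 hu.1) (hu.2.trans hyt)
        rw [if_pos this]; ring
      have hint : (∫ u in x..y, (-α + C * z u)) ≤ ∫ _u in x..y, r' := by
        apply intervalIntegral.integral_mono_on hxy.le
        · exact (hcts.intervalIntegrable x y)
        · exact intervalIntegrable_const
        · exact hbound
      have hc : (∫ _u in x..y, r') = (y - x) * r' := by
        simp [intervalIntegral.integral_const, smul_eq_mul]
      have hzz : z y - z x ≤ (y - x) * r' := by
        have h3 := hineq x y hx.1 hxy.le
        rw [hcongr] at h3
        linarith
      rw [slope_def_field, div_lt_iff₀ (by linarith : (0:ℝ) < y - x)]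
      nlinarith
    · -- z 0 ≤ B 0
      have hB0 : B 0 = z₀ := by
        rw [hBdef]
        simp only [mul_zero, Real.exp_zero, one_mul, sub_add_cancel]
        exact mul_div_cancel_left₀ z₀ hC.ne'
      rw [hz0, hB0]
    · -- bound at contact points
      intro x _ hxB
      show -α + C * z x < -β + C * B x
      rw [hxB]
      linarith
  have hzt := key (right_mem_Icc.2 ht.le)
  have hexp : Real.exp (C*t) * Real.exp (-C * t) = 1 := by
    rw [← Real.exp_add]; norm_num
  have hep : 0 < Real.exp (C*t) := Real.exp_pos _
  have hnum : Real.exp (C*t) * (C*z₀ - β) + β < 0 := by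
    have h1 : C*z₀ - β < -β * Real.exp (-C * t) := by nlinarith
    nlinarith [mul_lt_mul_of_pos_left h1 hep]
  have hBt : B t < 0 := by
    rw [hBdef]
    exact div_neg_of_neg_of_pos hnum hC
  linarith [hnn t]
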